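/- For each integer d ≥ 2 set ε_d := (log₂ d)^{−2} and c′_d := ε_d + √(1/3 + ε_d/2). For x₁, …, x_m independent random vectors in S^{d−1}, each distributed according to σ_d, let T(d, m) be the number of triples (i, j, k) of pairwise distinct indices in {1, …, m} with x_i ≠ x_j, |⟨x_i, x_j⟩ − 1/3| ≤ ε_d, and |⟨(x_i − x_j)/‖x_i − x_j‖, x_k⟩ − c′_d| ≤ ε_d. Then for every η > 0 there exists D ∈ ℕ such that for all integers d ≥ D and all integers m ≥ 2^{((1/4)·log₂(27/16) + η)·d}, the expectation satisfies E[T(d, m)] ≥ m. -/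

import Mathlib

open MeasureTheory ProbabilityTheory Metric Filter
open scoped RealInnerProductSpace Classical ENNReal

set_option maxHeartbeats 1000000

local notation "𝔼" d => EuclideanSpace ℝ (Fin d)

section geom
variable {d : ℕ}

lemma exists_li_apply_eq {a b : 𝔼 d} (h : ‖a‖ = ‖b‖) :
    ∃ O : (𝔼 d) ≃ₗᵢ[ℝ] (𝔼 d), O a = b :=
  ⟨Submodule.reflection (Submodule.span ℝ {a - b})ᗮ, Submodule.reflection_sub h⟩

lemma measurable_slab (u : 𝔼 d) {S : Set ℝ} (hS : MeasurableSet S) :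
    MeasurableSet {z : 𝔼 d | ⟪u, z⟫ ∈ S} := by
  exact (measurable_const.inner measurable_id) hS

lemma slab_invariant {σ : Measure (𝔼 d)}
    (hinv : ∀ O : (𝔼 d) ≃ₗᵢ[ℝ] (𝔼 d), Measure.map (⇑O) σ = σ)
    {u v : 𝔼 d} (hu : ‖u‖ = 1) (hv : ‖v‖ = 1) {S : Set ℝ} (hS : MeasurableSet S) :
    σ {z | ⟪u, z⟫ ∈ S} = σ {z | ⟪v, z⟫ ∈ S} := by
  obtain ⟨O, hO⟩ := exists_li_apply_eq (hv.trans hu.symm)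
  conv_lhs => rw [← hinv O]
  rw [Measure.map_apply O.continuous.measurable (measurable_slab u hS)]
  congr 1
  ext y
  simp only [Set.mem_preimage, Set.mem_setOf_eq, ← hO, O.inner_map_map]

lemma slab_eq_sector (σ : Measure (𝔼 d)) (hprob : IsProbabilityMeasure σ)
    (hsph : σ (sphere (0 : 𝔼 d) 1) = 1)
    (hinv : ∀ O : (𝔼 d) ≃ₗᵢ[ℝ] (𝔼 d), Measure.map (⇑O) σ = σ)
    (hd : 0 < d) {u w : 𝔼 d} (hu : ‖u‖ = 1) (hw : ‖w‖ = 1) {S : Set ℝ} (hS : MeasurableSet S) :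
    σ {z | ⟪u, z⟫ ∈ S} * volume (ball (0 : 𝔼 d) 1)
      = volume {y : 𝔼 d | y ∈ ball (0 : 𝔼 d) 1 ∧ y ≠ 0 ∧ ⟪w, ‖y‖⁻¹ • y⟫ ∈ S} := by
  haveI : Nontrivial (𝔼 d) := ⟨EuclideanSpace.single ⟨0, hd⟩ 1, 0, by
    intro h
    have := congrArg (fun v : 𝔼 d => v ⟨0, hd⟩) h
    simpa using this⟩
  set B : Set (𝔼 d) := ball (0 : 𝔼 d) 1 \ {0} with hB
  have hBm : MeasurableSet B := measurableSet_ball.diff (measurableSet_singleton 0)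
  set ρ : Measure (𝔼 d) := volume.restrict B with hρ
  have hρfin : IsFiniteMeasure ρ := by
    constructor
    rw [hρ, Measure.restrict_apply_univ]
    exact lt_of_le_of_lt (measure_mono Set.diff_subset) measure_ball_lt_top
  set C : Set ((𝔼 d) × (𝔼 d)) := {p | ⟪‖p.1‖⁻¹ • p.1, p.2⟫ ∈ S} with hC
  have hCm : MeasurableSet C := by
    have : Measurable (fun p : (𝔼 d) × (𝔼 d) => ⟪‖p.1‖⁻¹ • p.1, p.2⟫) :=
      (((measurable_norm.comp measurable_fst).inv).smul measurable_fst).inner measurable_snd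
    exact this hS
  have h1 : (ρ.prod σ) C = σ {z | ⟪u, z⟫ ∈ S} * volume (ball (0 : 𝔼 d) 1) := by
    rw [Measure.prod_apply hCm]
    have hae : ∀ᵐ x ∂ρ, σ (Prod.mk x ⁻¹' C) = σ {z | ⟪u, z⟫ ∈ S} := by
      refine (ae_restrict_mem hBm).mono fun x hx => ?_
      have hx0 : x ≠ 0 := hx.2
      have : Prod.mk x ⁻¹' C = {z | ⟪‖x‖⁻¹ • x, z⟫ ∈ S} := rfl
      rw [this]
      exact slab_invariant hinv (norm_smul_inv_norm hx0) hu hS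
    rw [lintegral_congr_ae hae, lintegral_const]
    congr 1
    rw [hρ, Measure.restrict_apply_univ, hB,
      measure_diff_null (measure_singleton 0)]
  have h2 : (ρ.prod σ) C
      = volume {y : 𝔼 d | y ∈ ball (0 : 𝔼 d) 1 ∧ y ≠ 0 ∧ ⟪w, ‖y‖⁻¹ • y⟫ ∈ S} := by
    rw [Measure.prod_apply_symm hCm]
    have hsphae : ∀ᵐ z ∂σ, ‖z‖ = 1 := by
      rw [ae_iff]
      refine measure_mono_null (t := (sphere (0 : 𝔼 d) 1)ᶜ) (fun z hz => ?_) ?_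
      · exact (Set.mem_compl_iff _ _).2 (fun hz' => hz (mem_sphere_zero_iff_norm.1 hz'))
      · rw [measure_compl ((isClosed_sphere.measurableSet)) (measure_ne_top σ _), hsph]
        simp [hprob.measure_univ]
    have hae : ∀ᵐ z ∂σ, ρ ((fun x => (x, z)) ⁻¹' C)
        = volume {y : 𝔼 d | y ∈ ball (0 : 𝔼 d) 1 ∧ y ≠ 0 ∧ ⟪w, ‖y‖⁻¹ • y⟫ ∈ S} := by
      refine hsphae.mono fun z hz => ?_
      obtain ⟨O, hO⟩ := exists_li_apply_eq (d := d) (a := w) (b := z) (by rw [hw, hz])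
      have hmeas : MeasurableSet {x : 𝔼 d | ⟪‖x‖⁻¹ • x, z⟫ ∈ S} := by
        exact ((measurable_norm.inv.smul measurable_id).inner_const) hS
      have hpre : (fun x => (x, z)) ⁻¹' C = {x | ⟪‖x‖⁻¹ • x, z⟫ ∈ S} := rfl
      rw [hpre, hρ, Measure.restrict_apply hmeas]
      have hOpre : ⇑O ⁻¹' ({x | ⟪‖x‖⁻¹ • x, z⟫ ∈ S} ∩ B)
          = {y : 𝔼 d | ⟪w, ‖y‖⁻¹ • y⟫ ∈ S} ∩ B := by
        ext y
        have hnz : O y = 0 ↔ y = 0 := by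
          constructor
          · intro h; exact O.injective (by simpa using h)
          · intro h; simp [h]
        have hball : O y ∈ ball (0 : 𝔼 d) 1 ↔ y ∈ ball (0 : 𝔼 d) 1 := by
          simp [mem_ball_zero_iff, O.norm_map]
        have hinner : ⟪‖O y‖⁻¹ • O y, z⟫ = ⟪w, ‖y‖⁻¹ • y⟫ := by
          rw [← hO, O.norm_map, inner_smul_left, O.inner_map_map, RCLike.conj_to_real,
            real_inner_comm, ← inner_smul_right]
        simp only [Set.mem_preimage, Set.mem_inter_iff, Set.mem_setOf_eq, hB, Set.mem_diff,
          Set.mem_singleton_iff, hnz, hball, hinner]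
      calc volume ({x : 𝔼 d | ⟪‖x‖⁻¹ • x, z⟫ ∈ S} ∩ B)
          = volume (⇑O ⁻¹' ({x | ⟪‖x‖⁻¹ • x, z⟫ ∈ S} ∩ B)) :=
            ((O.measurePreserving).measure_preimage (hmeas.inter hBm).nullMeasurableSet).symm
        _ = volume ({y : 𝔼 d | ⟪w, ‖y‖⁻¹ • y⟫ ∈ S} ∩ B) := by rw [hOpre]
        _ = volume {y : 𝔼 d | y ∈ ball (0 : 𝔼 d) 1 ∧ y ≠ 0 ∧ ⟪w, ‖y‖⁻¹ • y⟫ ∈ S} := by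
            congr 1
            ext y
            simp only [Set.mem_inter_iff, Set.mem_setOf_eq, hB, Set.mem_diff,
              Set.mem_singleton_iff]
            tauto
    rw [lintegral_congr_ae hae, lintegral_const, hprob.measure_univ, mul_one]
  rw [← h1, h2]

end geom

section helpers
variable (n : ℕ)

noncomputable def psiMap : (𝔼 (n+1)) → ℝ × (Fin n → ℝ) :=
  (MeasurableEquiv.piFinSuccAbove (fun _ : Fin (n+1) => ℝ) 0) ∘
    ((MeasurableEquiv.toLp 2 (Fin (n+1) → ℝ)).symm)

lemma psiMap_mp : MeasurePreserving (psiMap n) volume volume :=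
  (volume_preserving_piFinSuccAbove (fun _ : Fin (n+1) => ℝ) 0).comp
    (EuclideanSpace.volume_preserving_symm_measurableEquiv_toLp (Fin (n+1)))

lemma psiMap_apply (y : 𝔼 (n+1)) :
    psiMap n y = (y 0, fun j => y (Fin.succ j)) := by
  simp only [psiMap, Function.comp_apply, MeasurableEquiv.piFinSuccAbove_apply]
  have : ⇑((MeasurableEquiv.toLp 2 (Fin (n+1) → ℝ)).symm) = fun (x : 𝔼 (n+1)) (i : Fin (n+1)) => x i := by
    funext x
    rfl
  rw [this]
  simp [Fin.insertNthEquiv]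
  rfl

lemma nontrivial_euc (hn : 0 < n) : Nontrivial (𝔼 n) := by
  refine ⟨EuclideanSpace.single ⟨0, hn⟩ 1, 0, fun h => ?_⟩
  have := congrArg (fun v : 𝔼 n => v ⟨0, hn⟩) h
  simp at this

lemma pi_norm_set {S : Set ℝ} (hS : MeasurableSet S) :
    volume {v : Fin n → ℝ | Real.sqrt (∑ i, (v i)^2) ∈ S} = volume {w : 𝔼 n | ‖w‖ ∈ S} := by
  have hm : Measurable fun v : Fin n → ℝ => Real.sqrt (∑ i, (v i)^2) :=
    Real.continuous_sqrt.measurable.comp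
      (Finset.measurable_sum _ fun i _ => (measurable_pi_apply i).pow_const 2)
  have h := (EuclideanSpace.volume_preserving_symm_measurableEquiv_toLp (Fin n)).measure_preimage
    (hm hS).nullMeasurableSet
  show volume ((fun v : Fin n → ℝ => Real.sqrt (∑ i, (v i)^2)) ⁻¹' S) = _
  rw [← h]
  congr 1
  ext w
  simp only [Set.mem_preimage, Set.mem_setOf_eq, EuclideanSpace.norm_eq]
  have heq : ∀ i, (((MeasurableEquiv.toLp 2 (Fin n → ℝ)).symm) w) i = w i := fun i => rfl
  have : ∀ i, ‖w i‖ ^ 2 = ((((MeasurableEquiv.toLp 2 (Fin n → ℝ)).symm) w) i)^2 := by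
    intro i
    rw [heq, Real.norm_eq_abs, sq_abs]
  simp_rw [this]

lemma annulus_vol (hn : 0 < n) {a b : ℝ} (h0 : 0 ≤ a) (hab : a ≤ b) :
    volume {w : 𝔼 n | ‖w‖ ∈ Set.Ico a b}
      = (ENNReal.ofReal (b^n) - ENNReal.ofReal (a^n)) * volume (ball (0 : 𝔼 n) 1) := by
  haveI := nontrivial_euc n hn
  have hset : {w : 𝔼 n | ‖w‖ ∈ Set.Ico a b} = ball (0 : 𝔼 n) b \ ball (0 : 𝔼 n) a := by
    ext w
    simp only [Set.mem_setOf_eq, Set.mem_Ico, Set.mem_diff, mem_ball_zero_iff, not_lt]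
    tauto
  rw [hset, measure_diff (ball_subset_ball hab) measurableSet_ball.nullMeasurableSet
    (ne_of_lt measure_ball_lt_top),
    Measure.addHaar_ball volume _ (h0.trans hab), Measure.addHaar_ball volume _ h0,
    finrank_euclideanSpace_fin, ENNReal.sub_mul]
  intro _ _
  exact ne_of_lt measure_ball_lt_top

lemma ball_succ_le (hn : 0 < n) :
    volume (ball (0 : 𝔼 (n+1)) 1) ≤ 2 * volume (ball (0 : 𝔼 n) 1) := by
  haveI := nontrivial_euc n hn
  have hsub : ball (0 : 𝔼 (n+1)) 1 ⊆
      psiMap n ⁻¹' ((Set.Icc (-1:ℝ) 1) ×ˢ {v : Fin n → ℝ | Real.sqrt (∑ i, (v i)^2) ∈ Set.Iic (1:ℝ)}) := by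
    intro y hy
    rw [mem_ball_zero_iff] at hy
    have hnorm : ‖y‖ = Real.sqrt (∑ i, (y i)^2) := by
      rw [EuclideanSpace.norm_eq]
      congr 1
      exact Finset.sum_congr rfl fun i _ => by rw [Real.norm_eq_abs, sq_abs]
    simp only [Set.mem_preimage, psiMap_apply, Set.prodMk_mem_set_prod_eq, Set.mem_Icc,
      Set.mem_setOf_eq]
    have hsum : (∑ i : Fin (n+1), (y i)^2) = (y 0)^2 + ∑ j : Fin n, (y (Fin.succ j))^2 :=
      Fin.sum_univ_succ _
    have hy0 : |y 0| ≤ ‖y‖ := by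
      rw [hnorm, ← Real.sqrt_sq_eq_abs]
      apply Real.sqrt_le_sqrt
      rw [hsum]
      have : (0:ℝ) ≤ ∑ j : Fin n, (y (Fin.succ j))^2 :=
        Finset.sum_nonneg fun j _ => sq_nonneg _
      linarith
    have hy2 : Real.sqrt (∑ j : Fin n, (y (Fin.succ j))^2) ≤ ‖y‖ := by
      rw [hnorm]
      apply Real.sqrt_le_sqrt
      rw [hsum]
      nlinarith [sq_nonneg (y 0)]
    refine ⟨⟨?_, ?_⟩, ?_⟩
    · cases abs_le.1 (hy0.trans hy.le) with | intro h1 h2 => exact h1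
    · cases abs_le.1 (hy0.trans hy.le) with | intro h1 h2 => exact h2
    · exact Set.mem_Iic.2 (hy2.trans hy.le)
  have hTm : MeasurableSet ((Set.Icc (-1:ℝ) 1) ×ˢ {v : Fin n → ℝ | Real.sqrt (∑ i, (v i)^2) ∈ Set.Iic (1:ℝ)}) := by
    refine measurableSet_Icc.prod ?_
    have : Measurable fun v : Fin n → ℝ => Real.sqrt (∑ i, (v i)^2) :=
      Real.continuous_sqrt.measurable.comp
        (Finset.measurable_sum _ fun i _ => (measurable_pi_apply i).pow_const 2)
    exact this measurableSet_Iic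
  calc volume (ball (0 : 𝔼 (n+1)) 1)
      ≤ volume (psiMap n ⁻¹' ((Set.Icc (-1:ℝ) 1) ×ˢ
          {v : Fin n → ℝ | Real.sqrt (∑ i, (v i)^2) ∈ Set.Iic (1:ℝ)})) := measure_mono hsub
    _ = volume ((Set.Icc (-1:ℝ) 1) ×ˢ {v : Fin n → ℝ | Real.sqrt (∑ i, (v i)^2) ∈ Set.Iic (1:ℝ)}) :=
        (psiMap_mp n).measure_preimage hTm.nullMeasurableSet
    _ = 2 * volume (ball (0 : 𝔼 n) 1) := by
        rw [Measure.volume_eq_prod, Measure.prod_prod, Real.volume_Icc,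
          pi_norm_set n (measurableSet_Iic)]
        have : {w : 𝔼 n | ‖w‖ ∈ Set.Iic (1:ℝ)} = closedBall (0 : 𝔼 n) 1 := by
          ext w; simp [mem_closedBall_zero_iff]
        rw [this, Measure.addHaar_closedBall_eq_addHaar_ball]
        norm_num
end helpers

lemma ratio_bounds {t δ N a : ℝ} (ht0 : 0 < t) (ht1 : t < 1) (hδ0 : 0 < δ) (hδ : δ ≤ 1/2)
    (hN1 : 1 - δ ≤ N) (hNlt : N ≤ 1) (ha1 : t*(1-δ) ≤ a) (ha2 : a ≤ t) :
    t - 2*δ ≤ N⁻¹ * a ∧ N⁻¹ * a ≤ t + 2*δ := by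
  have h1δ : (0:ℝ) < 1 - δ := by linarith
  have hN0 : 0 < N := by linarith
  have hinv : N⁻¹ * a = a / N := by rw [div_eq_inv_mul]
  constructor
  · rw [hinv, le_div_iff₀ hN0]
    nlinarith [mul_nonneg hδ0.le hN0.le, mul_le_mul_of_nonneg_right hNlt
      (by linarith : (0:ℝ) ≤ t), mul_nonneg hδ0.le (sub_nonneg.2 hNlt)]
  · rw [hinv, div_le_iff₀ hN0]
    nlinarith [mul_le_mul_of_nonneg_left hN1 (by linarith : (0:ℝ) ≤ t + 2*δ)]

lemma norm_facts {t δ s a r N : ℝ} (ht0 : 0 < t) (ht1 : t < 1) (hδ0 : 0 < δ) (hδ : δ ≤ 1/2)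
    (hs0 : 0 < s) (hs2 : s^2 = 1 - t^2) (hNsq : N^2 = a^2 + r^2) (hNnn : 0 ≤ N)
    (ha1 : t*(1-δ) ≤ a) (ha2 : a < t) (hr1 : s*(1-δ) ≤ r) (hr2 : r < s) (hrnn : 0 ≤ r) :
    N < 1 ∧ 1 - δ ≤ N := by
  have h1δ : (0:ℝ) < 1 - δ := by linarith
  have ha0 : 0 < a := lt_of_lt_of_le (mul_pos ht0 h1δ) ha1
  have h1 : a^2 < t^2 := by nlinarith
  have h2 : r^2 < s^2 := by nlinarith
  have hN2 : N^2 < 1 := by nlinarith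
  have h3 : (t*(1-δ))^2 ≤ a^2 := pow_le_pow_left₀ (mul_pos ht0 h1δ).le ha1 2
  have h4 : (s*(1-δ))^2 ≤ r^2 := pow_le_pow_left₀ (mul_pos hs0 h1δ).le hr1 2
  have h5 : (1-δ)^2 ≤ N^2 := by nlinarith
  constructor
  · nlinarith [sq_nonneg (N - 1)]
  · nlinarith [sq_nonneg (N - (1-δ))]

lemma sector_lower (n : ℕ) (hn : 0 < n) {t δ : ℝ} (ht0 : 0 < t) (ht1 : t < 1)
    (hδ0 : 0 < δ) (hδ : δ ≤ 1/2) :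
    ENNReal.ofReal (t * δ * (Real.sqrt (1 - t^2) ^ n * (1 - (1-δ)^n))) * volume (ball (0 : 𝔼 n) 1)
      ≤ volume {y : 𝔼 (n+1) | y ∈ ball (0 : 𝔼 (n+1)) 1 ∧ y ≠ 0 ∧
          ⟪EuclideanSpace.single (0 : Fin (n+1)) (1:ℝ), ‖y‖⁻¹ • y⟫ ∈ Set.Icc (t - 2*δ) (t + 2*δ)} := by
  set s := Real.sqrt (1 - t^2) with hs
  have h1t : (0:ℝ) < 1 - t^2 := by nlinarith
  have hs0 : 0 < s := Real.sqrt_pos.2 h1t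
  have hs2 : s^2 = 1 - t^2 := Real.sq_sqrt h1t.le
  have hs1 : s ≤ 1 := Real.sqrt_le_one.mpr (by nlinarith)
  have h1δ : (0:ℝ) < 1 - δ := by linarith
  set T : Set (ℝ × (Fin n → ℝ)) := (Set.Ico (t*(1-δ)) t) ×ˢ
    {v : Fin n → ℝ | Real.sqrt (∑ i, (v i)^2) ∈ Set.Ico (s*(1-δ)) s} with hT
  have hmsq : Measurable fun v : Fin n → ℝ => Real.sqrt (∑ i, (v i)^2) :=
    Real.continuous_sqrt.measurable.comp
      (Finset.measurable_sum _ fun i _ => (measurable_pi_apply i).pow_const 2)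
  have hTm : MeasurableSet T := measurableSet_Ico.prod (hmsq measurableSet_Ico)
  have hvolT : volume T = ENNReal.ofReal (t * δ) *
      (ENNReal.ofReal (s ^ n * (1 - (1-δ)^n)) * volume (ball (0 : 𝔼 n) 1)) := by
    rw [hT, Measure.volume_eq_prod, Measure.prod_prod, Real.volume_Ico,
      pi_norm_set n measurableSet_Ico,
      annulus_vol n hn (by positivity) (by nlinarith)]
    have e1 : t - t * (1-δ) = t * δ := by ring
    have e2 : ENNReal.ofReal (s^n) - ENNReal.ofReal ((s*(1-δ))^n)
        = ENNReal.ofReal (s^n * (1 - (1-δ)^n)) := by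
      rw [← ENNReal.ofReal_sub _ (by positivity)]
      congr 1
      rw [mul_pow]
      ring
    rw [e1, e2]
  have hsub : psiMap n ⁻¹' T ⊆ {y : 𝔼 (n+1) | y ∈ ball (0 : 𝔼 (n+1)) 1 ∧ y ≠ 0 ∧
      ⟪EuclideanSpace.single (0 : Fin (n+1)) (1:ℝ), ‖y‖⁻¹ • y⟫ ∈ Set.Icc (t - 2*δ) (t + 2*δ)} := by
    intro y hy
    rw [Set.mem_preimage, psiMap_apply, hT, Set.prodMk_mem_set_prod_eq] at hy
    obtain ⟨hy1, hy2⟩ := hy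
    rw [Set.mem_Ico] at hy1
    rw [Set.mem_setOf_eq, Set.mem_Ico] at hy2
    set r2 := Real.sqrt (∑ j : Fin n, (y (Fin.succ j))^2) with hr2
    have hBs : (0:ℝ) ≤ ∑ j : Fin n, (y (Fin.succ j))^2 :=
      Finset.sum_nonneg fun j _ => sq_nonneg _
    have hr2sq : r2^2 = ∑ j : Fin n, (y (Fin.succ j))^2 := Real.sq_sqrt hBs
    have h1δ : (0:ℝ) < 1 - δ := by linarith
    have hy0pos : 0 < y 0 := lt_of_lt_of_le (mul_pos ht0 h1δ) hy1.1
    have hnorm : ‖y‖ = Real.sqrt ((y 0)^2 + r2^2) := by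
      rw [EuclideanSpace.norm_eq]
      congr 1
      rw [hr2sq, Fin.sum_univ_succ]
      congr 1
      · rw [Real.norm_eq_abs, sq_abs]
      · exact Finset.sum_congr rfl fun j _ => by rw [Real.norm_eq_abs, sq_abs]
    have hr2nn : 0 ≤ r2 := Real.sqrt_nonneg _
    have hNsq : ‖y‖^2 = (y 0)^2 + r2^2 := by
      rw [hnorm, Real.sq_sqrt (add_nonneg (sq_nonneg _) (sq_nonneg _))]
    obtain ⟨hNlt, hNge⟩ := norm_facts ht0 ht1 hδ0 hδ hs0 hs2 hNsq (norm_nonneg y)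
      hy1.1 hy1.2 hy2.1 hy2.2 hr2nn
    have hNpos : 0 < ‖y‖ := lt_of_lt_of_le h1δ hNge
    have hynz : y ≠ 0 := fun h0 => by
      rw [h0] at hy0pos
      simp at hy0pos
    refine ⟨mem_ball_zero_iff.2 hNlt, hynz, ?_⟩
    have hip : ⟪EuclideanSpace.single (0 : Fin (n+1)) (1:ℝ), ‖y‖⁻¹ • y⟫ = ‖y‖⁻¹ * y 0 := by
      rw [EuclideanSpace.inner_single_left]
      simp [PiLp.smul_apply, smul_eq_mul]
    rw [hip, Set.mem_Icc]
    exact ratio_bounds ht0 ht1 hδ0 hδ hNge hNlt.le hy1.1 hy1.2.le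
  calc ENNReal.ofReal (t * δ * (s ^ n * (1 - (1-δ)^n))) * volume (ball (0 : 𝔼 n) 1)
      = volume T := by
        rw [hvolT, ENNReal.ofReal_mul (by positivity), mul_assoc]
    _ = volume (psiMap n ⁻¹' T) := ((psiMap_mp n).measure_preimage hTm.nullMeasurableSet).symm
    _ ≤ _ := measure_mono hsub

lemma norm_e1 (d : ℕ) (hd : 0 < d) [NeZero d] : ‖EuclideanSpace.single (0 : Fin d) (1:ℝ)‖ = 1 := by
  rw [EuclideanSpace.norm_single]
  norm_num

lemma slab_lower (n : ℕ) (hn : 0 < n) (σ : Measure (𝔼 (n+1)))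
    (hprob : IsProbabilityMeasure σ) (hsph : σ (sphere (0 : 𝔼 (n+1)) 1) = 1)
    (hinv : ∀ O : (𝔼 (n+1)) ≃ₗᵢ[ℝ] (𝔼 (n+1)), Measure.map (⇑O) σ = σ)
    {u : 𝔼 (n+1)} (hu : ‖u‖ = 1) {t δ : ℝ} (ht0 : 0 < t) (ht1 : t < 1)
    (hδ0 : 0 < δ) (hδ : δ ≤ 1/2) :
    ENNReal.ofReal (t * δ * (Real.sqrt (1 - t^2) ^ n * (1 - (1-δ)^n)) / 2)
      ≤ σ {z | ⟪u, z⟫ ∈ Set.Icc (t - 2*δ) (t + 2*δ)} := by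
  have he1 : ‖EuclideanSpace.single (0 : Fin (n+1)) (1:ℝ)‖ = 1 := norm_e1 _ (Nat.succ_pos n)
  have key := slab_eq_sector σ hprob hsph hinv (Nat.succ_pos n) hu he1
    (measurableSet_Icc (a := t - 2*δ) (b := t + 2*δ))
  have hchain : ENNReal.ofReal (t * δ * (Real.sqrt (1 - t^2) ^ n * (1 - (1-δ)^n)))
        * volume (ball (0 : 𝔼 n) 1)
      ≤ (σ {z | ⟪u, z⟫ ∈ Set.Icc (t - 2*δ) (t + 2*δ)} * 2) * volume (ball (0 : 𝔼 n) 1) := by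
    calc _ ≤ volume {y : 𝔼 (n+1) | y ∈ ball (0 : 𝔼 (n+1)) 1 ∧ y ≠ 0 ∧
          ⟪EuclideanSpace.single (0 : Fin (n+1)) (1:ℝ), ‖y‖⁻¹ • y⟫ ∈ Set.Icc (t - 2*δ) (t + 2*δ)} :=
            sector_lower n hn ht0 ht1 hδ0 hδ
      _ = σ {z | ⟪u, z⟫ ∈ Set.Icc (t - 2*δ) (t + 2*δ)} * volume (ball (0 : 𝔼 (n+1)) 1) := key.symm
      _ ≤ σ {z | ⟪u, z⟫ ∈ Set.Icc (t - 2*δ) (t + 2*δ)} * (2 * volume (ball (0 : 𝔼 n) 1)) :=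
            mul_le_mul_right (ball_succ_le n hn) _
      _ = _ := by ring
  have hc := (ENNReal.mul_le_mul_iff_left (measure_ball_pos volume (0 : 𝔼 n) one_pos).ne'
    (ne_of_lt measure_ball_lt_top)).1 hchain
  have h2 : ENNReal.ofReal (t * δ * (Real.sqrt (1 - t^2) ^ n * (1 - (1-δ)^n)) / 2) * 2
      = ENNReal.ofReal (t * δ * (Real.sqrt (1 - t^2) ^ n * (1 - (1-δ)^n))) := by
    rw [← ENNReal.ofReal_ofNat 2, ← ENNReal.ofReal_mul' (by norm_num)]
    congr 1
    ring
  rw [← h2] at hc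
  exact (ENNReal.mul_le_mul_iff_left (two_ne_zero) (ENNReal.ofNat_ne_top)).1 hc

section tp
variable {d : ℕ}

noncomputable def uvec (a b : 𝔼 d) : 𝔼 d := ‖a - b‖⁻¹ • (a - b)

def tripleSet (d : ℕ) (ε c' : ℝ) : Set (((𝔼 d) × (𝔼 d)) × (𝔼 d)) :=
  {x | x.1.1 ≠ x.1.2 ∧ |⟪x.1.1, x.1.2⟫ - 1/3| ≤ ε ∧ |⟪uvec x.1.1 x.1.2, x.2⟫ - c'| ≤ ε}

lemma pairSet_measurable (ε : ℝ) :
    MeasurableSet {p : (𝔼 d) × (𝔼 d) | p.1 ≠ p.2 ∧ |⟪p.1, p.2⟫ - 1/3| ≤ ε} := by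
  refine MeasurableSet.inter ?_ ?_
  · exact (isClosed_eq continuous_fst continuous_snd).measurableSet.compl
  · have : Continuous fun p : (𝔼 d) × (𝔼 d) => |⟪p.1, p.2⟫ - 1/3| :=
      ((continuous_inner (𝕜 := ℝ)).sub continuous_const).abs
    exact (isClosed_le this continuous_const).measurableSet

lemma tripleSet_measurable (ε c' : ℝ) : MeasurableSet (tripleSet d ε c') := by
  refine (MeasurableSet.inter ?_ (MeasurableSet.inter ?_ ?_))
  · exact (isClosed_eq (continuous_fst.comp continuous_fst)
      (continuous_snd.comp continuous_fst)).measurableSet.compl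
  · have : Continuous fun x : ((𝔼 d) × (𝔼 d)) × (𝔼 d) => |⟪x.1.1, x.1.2⟫ - 1/3| :=
      (((continuous_inner (𝕜 := ℝ)).comp
        ((continuous_fst.comp continuous_fst).prodMk
          (continuous_snd.comp continuous_fst))).sub continuous_const).abs
    exact (isClosed_le this continuous_const).measurableSet
  · have hm : Measurable fun x : ((𝔼 d) × (𝔼 d)) × (𝔼 d) => |⟪uvec x.1.1 x.1.2, x.2⟫ - c'| := by
      have hsub : Measurable fun x : ((𝔼 d) × (𝔼 d)) × (𝔼 d) => x.1.1 - x.1.2 :=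
        (measurable_fst.fst).sub (measurable_fst.snd)
      have huv : Measurable fun x : ((𝔼 d) × (𝔼 d)) × (𝔼 d) => uvec x.1.1 x.1.2 :=
        ((hsub.norm).inv).smul hsub
      exact ((huv.inner measurable_snd).sub measurable_const).abs
    exact hm measurableSet_Iic
  
lemma triple_prob (n : ℕ) (σ : Measure (𝔼 (n+1)))
    (hprob : IsProbabilityMeasure σ) (hsph : σ (sphere (0 : 𝔼 (n+1)) 1) = 1)
    (hinv : ∀ O : (𝔼 (n+1)) ≃ₗᵢ[ℝ] (𝔼 (n+1)), Measure.map (⇑O) σ = σ)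
    {ε c' : ℝ} (hε0 : 0 < ε) (hε2 : ε < 2/3) :
    ((σ.prod σ).prod σ) (tripleSet (n+1) ε c')
      = σ {z | ⟪EuclideanSpace.single (0 : Fin (n+1)) (1:ℝ), z⟫ ∈ Set.Icc (1/3 - ε) (1/3 + ε)}
        * σ {z | ⟪EuclideanSpace.single (0 : Fin (n+1)) (1:ℝ), z⟫ ∈ Set.Icc (c' - ε) (c' + ε)} := by
  set e1 : 𝔼 (n+1) := EuclideanSpace.single (0 : Fin (n+1)) (1:ℝ) with he1def
  have he1 : ‖e1‖ = 1 := norm_e1 (n+1) (Nat.succ_pos n)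
  set s1 := σ {z | ⟪e1, z⟫ ∈ Set.Icc (1/3 - ε) (1/3 + ε)} with hs1def
  set s2 := σ {z | ⟪e1, z⟫ ∈ Set.Icc (c' - ε) (c' + ε)} with hs2def
  set A1 : Set ((𝔼 (n+1)) × (𝔼 (n+1))) := {p | p.1 ≠ p.2 ∧ |⟪p.1, p.2⟫ - 1/3| ≤ ε} with hA1def
  have hA1m : MeasurableSet A1 := pairSet_measurable ε
  rw [Measure.prod_apply (tripleSet_measurable ε c')]
  have hslice : ∀ p : (𝔼 (n+1)) × (𝔼 (n+1)),
      σ (Prod.mk p ⁻¹' (tripleSet (n+1) ε c')) = A1.indicator (fun _ => s2) p := by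
    intro p
    by_cases hp : p ∈ A1
    · rw [Set.indicator_of_mem hp]
      have hpre : Prod.mk p ⁻¹' (tripleSet (n+1) ε c')
          = {c | ⟪uvec p.1 p.2, c⟫ ∈ Set.Icc (c' - ε) (c' + ε)} := by
        ext c
        simp only [Set.mem_preimage, tripleSet, Set.mem_setOf_eq, Set.mem_Icc]
        constructor
        · rintro ⟨-, -, h3⟩
          have := abs_le.1 h3
          constructor <;> linarith [this.1, this.2]
        · intro hc
          exact ⟨hp.1, hp.2, abs_le.2 ⟨by linarith [hc.1], by linarith [hc.2]⟩⟩
      rw [hpre, hs2def]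
      have hunit : ‖uvec p.1 p.2‖ = 1 :=
        norm_smul_inv_norm (sub_ne_zero.2 hp.1)
      exact slab_invariant hinv hunit he1 measurableSet_Icc
    · rw [Set.indicator_of_notMem hp]
      have hpre : Prod.mk p ⁻¹' (tripleSet (n+1) ε c') = ∅ := by
        ext c
        simp only [Set.mem_preimage, tripleSet, Set.mem_setOf_eq, Set.mem_empty_iff_false,
          iff_false]
        intro hcon
        exact hp ⟨hcon.1, hcon.2.1⟩
      rw [hpre, measure_empty]
  rw [lintegral_congr hslice, lintegral_indicator_const hA1m]
  have hA1 : (σ.prod σ) A1 = s1 := by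
    rw [Measure.prod_apply hA1m]
    have hsphae : ∀ᵐ a ∂σ, ‖a‖ = 1 := by
      rw [ae_iff]
      refine measure_mono_null (t := (sphere (0 : 𝔼 (n+1)) 1)ᶜ) (fun a ha => ?_) ?_
      · exact (Set.mem_compl_iff _ _).2 fun ha' => ha (mem_sphere_zero_iff_norm.1 ha')
      · rw [measure_compl isClosed_sphere.measurableSet (measure_ne_top σ _), hsph]
        simp [hprob.measure_univ]
    have hae : ∀ᵐ a ∂σ, σ (Prod.mk a ⁻¹' A1) = s1 := by
      refine hsphae.mono fun a ha => ?_
      have hpre : Prod.mk a ⁻¹' A1 = {b | ⟪a, b⟫ ∈ Set.Icc (1/3 - ε) (1/3 + ε)} := by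
        ext b
        simp only [Set.mem_preimage, hA1def, Set.mem_setOf_eq, Set.mem_Icc]
        constructor
        · rintro ⟨-, h2⟩
          have := abs_le.1 h2
          constructor <;> linarith [this.1, this.2]
        · intro hb
          refine ⟨fun hab => ?_, abs_le.2 ⟨by linarith [hb.1], by linarith [hb.2]⟩⟩
          rw [← hab] at hb
          rw [real_inner_self_eq_norm_sq, ha] at hb
          have h1 := hb.1
          have h2 := hb.2
          norm_num at h1 h2
          linarith
      rw [hpre, hs1def]
      exact slab_invariant hinv ha he1 measurableSet_Icc
    rw [lintegral_congr_ae hae, lintegral_const, hprob.measure_univ, mul_one]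
  rw [hA1, mul_comm]
end tp

lemma sum_ite_ne (m : ℕ) (i : Fin m) (c : ℕ) :
    (∑ j : Fin m, if i ≠ j then c else 0) = (m - 1) * c := by
  rw [← Finset.sum_filter, Finset.filter_ne, Finset.sum_const,
    Finset.card_erase_of_mem (Finset.mem_univ i), Finset.card_univ, Fintype.card_fin,
    smul_eq_mul]

lemma sum_ite_ne2 (m : ℕ) (i j : Fin m) (hij : i ≠ j) :
    (∑ k : Fin m, if i ≠ k ∧ j ≠ k then (1:ℕ) else 0) = m - 2 := by
  rw [← Finset.card_filter]
  have hset : Finset.univ.filter (fun k : Fin m => i ≠ k ∧ j ≠ k)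
      = (Finset.univ.erase i).erase j := by
    ext k
    simp only [Finset.mem_filter, Finset.mem_univ, true_and, Finset.mem_erase]
    constructor
    · rintro ⟨h1, h2⟩; exact ⟨h2.symm, h1.symm, trivial⟩
    · rintro ⟨h1, h2, -⟩; exact ⟨h2.symm, h1.symm⟩
  rw [hset, Finset.card_erase_of_mem (Finset.mem_erase.2 ⟨hij.symm, Finset.mem_univ j⟩),
    Finset.card_erase_of_mem (Finset.mem_univ i), Finset.card_univ, Fintype.card_fin]
  omega

lemma card_distinct (m : ℕ) :
    (Finset.univ.filter fun t : Fin m × Fin m × Fin m =>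
        t.1 ≠ t.2.1 ∧ t.1 ≠ t.2.2 ∧ t.2.1 ≠ t.2.2).card = m * ((m - 1) * (m - 2)) := by
  rw [Finset.card_filter, Fintype.sum_prod_type]
  have houter : ∀ i : Fin m,
      (∑ jk : Fin m × Fin m, if i ≠ jk.1 ∧ i ≠ jk.2 ∧ jk.1 ≠ jk.2 then (1:ℕ) else 0)
        = (m - 1) * (m - 2) := by
    intro i
    rw [Fintype.sum_prod_type]
    have hinner : ∀ j : Fin m,
        (∑ k : Fin m, if i ≠ j ∧ i ≠ k ∧ j ≠ k then (1:ℕ) else 0)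
          = if i ≠ j then (m - 2) else 0 := by
      intro j
      by_cases hij : i ≠ j
      · rw [if_pos hij, ← sum_ite_ne2 m i j hij]
        refine Finset.sum_congr rfl fun k _ => ?_
        by_cases h : i ≠ k ∧ j ≠ k
        · rw [if_pos ⟨hij, h.1, h.2⟩, if_pos h]
        · rw [if_neg (fun hc => h ⟨hc.2.1, hc.2.2⟩), if_neg h]
      · rw [if_neg hij]
        exact Finset.sum_eq_zero fun k _ => if_neg (fun hc => hij hc.1)
    rw [Finset.sum_congr rfl fun j _ => hinner j]
    exact sum_ite_ne m i (m - 2)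
  rw [Finset.sum_congr rfl fun i _ => houter i, Finset.sum_const, Finset.card_univ,
    Fintype.card_fin, smul_eq_mul]

variable {E : Type*} [MeasurableSpace E] {Ω : Type*} [MeasurableSpace Ω]

lemma joint_law {m : ℕ} (μ : Measure Ω) [IsProbabilityMeasure μ] (σ : Measure E)
    (x : Fin m → Ω → E) (hxm : ∀ i, Measurable (x i))
    (hxd : ∀ i, Measure.map (x i) μ = σ)
    (hindep : iIndepFun x μ)
    (i j k : Fin m) (hij : i ≠ j) (hik : i ≠ k) (hjk : j ≠ k) :
    Measure.map (fun ω => ((x i ω, x j ω), x k ω)) μ = (σ.prod σ).prod σ := by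
  have h1 : IndepFun (x i) (x j) μ := hindep.indepFun hij
  have hpair : Measure.map (fun ω => (x i ω, x j ω)) μ = σ.prod σ := by
    rw [(indepFun_iff_map_prod_eq_prod_map_map (hxm i).aemeasurable
      (hxm j).aemeasurable).1 h1, hxd i, hxd j]
  have h2 : IndepFun (fun ω => (x i ω, x j ω)) (x k) μ :=
    hindep.indepFun_prodMk hxm i j k hik hjk
  rw [(indepFun_iff_map_prod_eq_prod_map_map ((hxm i).prodMk (hxm j)).aemeasurable
    (hxm k).aemeasurable).1 h2, hpair, hxd k]

lemma m_part (M P : ℝ) (hM4 : 4 ≤ M) (hP0 : 0 ≤ P) (hkey : 16 ≤ P * M^2) :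
    ∀ m : ℕ, M ≤ (m:ℝ) → (m:ℝ) ≤ (m * ((m-1) * (m-2)) : ℕ) * P := by
  intro m hm
  have hm4 : (4:ℝ) ≤ m := le_trans hM4 hm
  have hm4' : 4 ≤ m := by exact_mod_cast hm4
  have hcast : ((m * ((m-1) * (m-2)) : ℕ) : ℝ) = (m:ℝ) * (((m:ℝ)-1) * ((m:ℝ)-2)) := by
    push_cast [Nat.cast_sub (by omega : 1 ≤ m), Nat.cast_sub (by omega : 2 ≤ m)]
    ring
  rw [hcast]
  have h1 : M/2 ≤ (m:ℝ) - 1 := by linarith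
  have h2 : M/2 ≤ (m:ℝ) - 2 := by linarith
  have h3 : (M/2)*(M/2) ≤ ((m:ℝ)-1)*((m:ℝ)-2) := mul_le_mul h1 h2 (by linarith) (by linarith)
  have h4 : (1:ℝ) ≤ ((m:ℝ)-1)*((m:ℝ)-2) * P := by
    have h5 := mul_le_mul_of_nonneg_right h3 hP0
    nlinarith
  nlinarith

lemma key16 (η : ℝ) (hη : 0 < η) (n : ℕ) (ε t2 : ℝ)
    (hε0 : 0 < ε) (hε12 : ε ≤ 1/2) (hεd : 1/((n:ℝ)+1) ≤ ε)
    (ht2a : 1/2 ≤ t2) (ht2b : t2 < 1)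
    (hQ : (16/27) * (2:ℝ)^(-η:ℝ) ≤ (8/9) * (1 - t2^2))
    (hRn : 1 ≤ ε/2 * n)
    (hbig : 6144 * ((n:ℝ)+1)^2 ≤ (2:ℝ)^(3/2 * η * ((n:ℝ)+1))) :
    16 ≤ ((1/3 * (ε/2) * (Real.sqrt (1 - (1/3:ℝ)^2) ^ n * (1 - (1-ε/2)^n)) / 2) *
         (t2 * (ε/2) * (Real.sqrt (1 - t2^2) ^ n * (1 - (1-ε/2)^n)) / 2)) *
        ((2:ℝ)^((1/4 * Real.logb 2 (27/16) + η) * ((n:ℝ)+1)))^2 := by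
  set dR : ℝ := (n:ℝ)+1 with hdR
  have hdR0 : (0:ℝ) < dR := by positivity
  have hn_le : (n:ℝ) ≤ dR := by rw [hdR]; linarith
  set c : ℝ := 1/4 * Real.logb 2 (27/16) with hc
  have hc0 : 0 ≤ c := mul_nonneg (by norm_num) (Real.logb_nonneg one_lt_two (by norm_num))
  set R : ℝ := 1 - (1-ε/2)^n with hR
  have h0R : (0:ℝ) ≤ 1 - ε/2 := by linarith
  have hRhalf : 1/2 ≤ R := by
    have h1 : (1-ε/2) ≤ Real.exp (-(ε/2)) := by
      have := Real.add_one_le_exp (-(ε/2)); linarith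
    have h2 : (1-ε/2)^n ≤ Real.exp (-(ε/2))^n := pow_le_pow_left₀ h0R h1 n
    have h3 : Real.exp (-(ε/2))^n = Real.exp ((n:ℝ) * (-(ε/2))) := (Real.exp_nat_mul _ n).symm
    have h4 : Real.exp ((n:ℝ) * (-(ε/2))) ≤ Real.exp (-1) :=
      Real.exp_le_exp.2 (by nlinarith)
    have h5 : Real.exp (-1) ≤ 1/2 := by
      rw [Real.exp_neg]
      have h6 : (2:ℝ) ≤ Real.exp 1 := by have := Real.add_one_le_exp 1; linarith
      rw [show (1:ℝ)/2 = 2⁻¹ by norm_num]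
      exact inv_anti₀ two_pos h6
    rw [hR]; rw [h3] at h2; linarith
  have ht20 : (0:ℝ) < t2 := by linarith
  set S1 : ℝ := Real.sqrt (1 - (1/3:ℝ)^2) with hS1
  set S2 : ℝ := Real.sqrt (1 - t2^2) with hS2
  set Qv : ℝ := (8/9) * (1 - t2^2) with hQv
  have ht2sq : t2^2 < 1 := by nlinarith
  have hQv0 : 0 < Qv := by rw [hQv]; nlinarith
  have hS1S2 : S1 * S2 = Real.sqrt Qv := by
    rw [hS1, hS2, ← Real.sqrt_mul (by norm_num : (0:ℝ) ≤ 1 - (1/3:ℝ)^2), hQv]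
    norm_num
  have hprod : ((1/3 * (ε/2) * (S1 ^ n * R) / 2) * (t2 * (ε/2) * (S2 ^ n * R) / 2))
      = (1/3 * t2 * (ε/2)^2 * R^2 / 4) * (S1*S2)^n := by
    rw [mul_pow]; ring
  set J : ℝ := 1/3 * t2 * (ε/2)^2 * R^2 / 4 with hJ
  have hJ0 : 0 ≤ J := by
    have h := mul_nonneg (mul_nonneg (mul_nonneg (show (0:ℝ) ≤ 1/3 by norm_num) ht20.le)
      (sq_nonneg (ε/2))) (sq_nonneg R)
    rw [hJ]; linarith
  have hM2 : ((2:ℝ)^((c + η) * dR))^2 = (27/16:ℝ)^(dR/2) * (2:ℝ)^(2*η*dR) := by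
    rw [← Real.rpow_natCast ((2:ℝ)^((c+η)*dR)) 2, ← Real.rpow_mul (by norm_num : (0:ℝ) ≤ 2)]
    have he : (c + η) * dR * ((2:ℕ):ℝ) = Real.logb 2 (27/16) * (dR/2) + 2*η*dR := by
      rw [hc]; push_cast; ring
    rw [he, Real.rpow_add two_pos, Real.rpow_mul (by norm_num : (0:ℝ) ≤ 2),
      Real.rpow_logb two_pos (by norm_num) (by norm_num)]
  have hSQn : (S1*S2)^n = Qv ^ ((n:ℝ)/2) := by
    rw [hS1S2, Real.sqrt_eq_rpow, ← Real.rpow_natCast (Qv ^ ((1:ℝ)/2)) n,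
      ← Real.rpow_mul hQv0.le]
    congr 1
    ring
  have hbase0 : (0:ℝ) < (16/27) * (2:ℝ)^(-η:ℝ) := by positivity
  have h6 : ((16/27) * (2:ℝ)^(-η:ℝ)) ^ ((n:ℝ)/2) ≤ Qv ^ ((n:ℝ)/2) :=
    Real.rpow_le_rpow hbase0.le hQ (by positivity)
  have h7 : ((16/27) * (2:ℝ)^(-η:ℝ)) ^ ((n:ℝ)/2)
      = (27/16:ℝ)^(-((n:ℝ)/2)) * (2:ℝ)^(-η*((n:ℝ)/2)) := by
    rw [Real.mul_rpow (by norm_num) (by positivity)]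
    congr 1
    · rw [show (16/27:ℝ) = (27/16:ℝ)⁻¹ by norm_num,
        ← Real.rpow_neg_one (27/16:ℝ), ← Real.rpow_mul (by norm_num : (0:ℝ) ≤ 27/16)]
      congr 1
      ring
    · rw [← Real.rpow_mul (by norm_num : (0:ℝ) ≤ 2)]
  have h8 : (27/16:ℝ)^(-((n:ℝ)/2)) * (27/16:ℝ)^(dR/2) = (27/16:ℝ)^((dR-(n:ℝ))/2) := by
    rw [← Real.rpow_add (by norm_num : (0:ℝ) < 27/16)]
    congr 1
    ring
  have h9 : (1:ℝ) ≤ (27/16:ℝ)^((dR-(n:ℝ))/2) := by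
    rw [show (1:ℝ) = (27/16:ℝ)^(0:ℝ) by simp]
    apply (Real.rpow_le_rpow_left_iff (by norm_num : (1:ℝ) < 27/16)).2
    linarith
  have h10 : (2:ℝ)^(3/2*η*dR) ≤ (2:ℝ)^(-η*((n:ℝ)/2)) * (2:ℝ)^(2*η*dR) := by
    rw [← Real.rpow_add two_pos]
    apply (Real.rpow_le_rpow_left_iff one_lt_two).2
    nlinarith [mul_le_mul_of_nonneg_left hn_le hη.le]
  have hεd2 : 1/(2*dR) ≤ ε/2 := by
    rw [div_le_div_iff₀ (by positivity) (by norm_num)]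
    rw [div_le_iff₀ hdR0] at hεd
    linarith
  have hjunk : 1/(384*dR^2) ≤ J := by
    have he2 : (1/(2*dR))^2 ≤ (ε/2)^2 := pow_le_pow_left₀ (by positivity) hεd2 2
    have hr2 : (1/2:ℝ)^2 ≤ R^2 := pow_le_pow_left₀ (by norm_num) hRhalf 2
    have h1 : (1/(2*dR))^2 = 1/(4*dR^2) := by field_simp; ring
    rw [h1] at he2
    rw [hJ]
    have hstep : 1/3 * (1/2) * (1/(4*dR^2)) * ((1/2:ℝ)^2) / 4 ≤ 1/3 * t2 * (ε/2)^2 * R^2 / 4 := by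
      gcongr
    calc 1/(384*dR^2) = 1/3 * (1/2) * (1/(4*dR^2)) * ((1/2:ℝ)^2) / 4 := by
          field_simp
          ring
      _ ≤ _ := hstep
  calc (16:ℝ) = (1/(384*dR^2)) * (6144 * dR^2) := by field_simp; ring
    _ ≤ J * (2:ℝ)^(3/2*η*dR) := mul_le_mul hjunk hbig (by positivity) hJ0
    _ = J * (1 * (2:ℝ)^(3/2*η*dR)) := by ring
    _ ≤ J * ((27/16:ℝ)^((dR-(n:ℝ))/2) * ((2:ℝ)^(-η*((n:ℝ)/2)) * (2:ℝ)^(2*η*dR))) := by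
        apply mul_le_mul_of_nonneg_left _ hJ0
        exact mul_le_mul h9 h10 (by positivity) (by positivity)
    _ = J * ((((16/27) * (2:ℝ)^(-η:ℝ)) ^ ((n:ℝ)/2)) * ((27/16:ℝ)^(dR/2) * (2:ℝ)^(2*η*dR))) := by
        rw [h7, ← h8]; ring
    _ ≤ J * ((Qv ^ ((n:ℝ)/2)) * ((27/16:ℝ)^(dR/2) * (2:ℝ)^(2*η*dR))) := by
        apply mul_le_mul_of_nonneg_left _ hJ0
        exact mul_le_mul_of_nonneg_right h6 (by positivity)
    _ = _ := by rw [hprod, hSQn, hM2]; ring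

noncomputable def epsf (d : ℕ) : ℝ := ((Real.logb 2 d)^2)⁻¹
noncomputable def t2f (d : ℕ) : ℝ := epsf d + Real.sqrt (1/3 + epsf d / 2)

lemma eventually_good (η : ℝ) (hη : 0 < η) :
    ∀ᶠ d : ℕ in atTop,
      (2 ≤ d) ∧
      0 < epsf d ∧ epsf d ≤ 1/2 ∧
      (Real.logb 2 d)^2 ≤ (d:ℝ)/8 ∧
      1/2 ≤ t2f d ∧ t2f d < 1 ∧
      16/27 * (2:ℝ)^(-η) ≤ 8/9 * (1 - (t2f d)^2) ∧
      4 ≤ (2:ℝ)^((1/4 * Real.logb 2 (27/16) + η) * (d:ℝ)) ∧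
      6144 * (d:ℝ)^2 ≤ (2:ℝ)^(3/2 * η * (d:ℝ)) := by
  have hLgN : Tendsto (fun d:ℕ => Real.logb 2 (d:ℝ)) atTop atTop :=
    (Real.tendsto_logb_atTop (by norm_num : (1:ℝ) < 2)).comp tendsto_natCast_atTop_atTop
  have hLg2N : Tendsto (fun d:ℕ => (Real.logb 2 (d:ℝ))^2) atTop atTop :=
    (tendsto_pow_atTop two_ne_zero).comp hLgN
  have hεto : Tendsto epsf atTop (nhds 0) := hLg2N.inv_tendsto_atTop
  have E1 : ∀ᶠ d:ℕ in atTop, 2 ≤ d := eventually_ge_atTop 2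
  have E2 : ∀ᶠ d:ℕ in atTop, 0 < epsf d :=
    (hLg2N.eventually_gt_atTop 0).mono fun d h => inv_pos.2 h
  have E3 : ∀ᶠ d:ℕ in atTop, epsf d ≤ 1/2 := by
    refine (hLg2N.eventually_ge_atTop 2).mono fun d h => ?_
    have h2 : ((Real.logb 2 (d:ℝ))^2)⁻¹ ≤ 2⁻¹ := inv_anti₀ (by norm_num) h
    rw [epsf]; linarith
  have E4 : ∀ᶠ d:ℕ in atTop, (Real.logb 2 (d:ℝ))^2 ≤ (d:ℝ)/8 := by
    have hreal : ∀ᶠ x:ℝ in atTop, (Real.logb 2 x)^2 ≤ x/8 := by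
      have hlog2 : (0:ℝ) < Real.log 2 := Real.log_pos one_lt_two
      have h := (isLittleO_log_rpow_atTop (by norm_num : (0:ℝ) < 1/2)).def
        (show (0:ℝ) < Real.log 2 / 4 by positivity)
      filter_upwards [h, eventually_ge_atTop (0:ℝ)] with x hx hx0
      have hsq : (x ^ ((1:ℝ)/2))^2 = x := by
        rw [← Real.rpow_natCast (x^((1:ℝ)/2)) 2, ← Real.rpow_mul hx0]
        norm_num
      have h2 : |Real.log x| ≤ Real.log 2/4 * |x ^ ((1:ℝ)/2)| := by
        simpa [Real.norm_eq_abs] using hx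
      have h3 : (Real.log x)^2 ≤ (Real.log 2/4)^2 * x := by
        have h4 := mul_self_le_mul_self (abs_nonneg (Real.log x)) h2
        have h5 : |x ^ ((1:ℝ)/2)| * |x ^ ((1:ℝ)/2)| = x := by
          rw [← abs_mul, ← sq, hsq, abs_of_nonneg hx0]
        nlinarith [abs_nonneg (Real.log x), sq_abs (Real.log x), sq_abs (x ^ ((1:ℝ)/2))]
      rw [Real.logb, div_pow, div_le_div_iff₀ (by positivity) (by norm_num)]
      nlinarith
    exact tendsto_natCast_atTop_atTop.eventually hreal
  have ht2to : Tendsto t2f atTop (nhds (Real.sqrt (1/3))) := by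
    have h1 : Tendsto (fun d:ℕ => 1/3 + epsf d/2) atTop (nhds (1/3)) := by
      have := tendsto_const_nhds (x := (1/3:ℝ)) (f := atTop (α := ℕ)) |>.add
        (hεto.div_const 2)
      simpa using this
    have h2 : Tendsto (fun d:ℕ => Real.sqrt (1/3 + epsf d/2)) atTop
        (nhds (Real.sqrt (1/3))) := (Real.continuous_sqrt.tendsto _).comp h1
    have h3 : Tendsto (fun d:ℕ => epsf d + Real.sqrt (1/3 + epsf d/2)) atTop
        (nhds (0 + Real.sqrt (1/3))) := hεto.add h2
    rw [zero_add] at h3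
    exact h3
  have hhalf : (1/2:ℝ) < Real.sqrt (1/3) := (Real.lt_sqrt (by norm_num)).2 (by norm_num)
  have hlt1 : Real.sqrt (1/3) < 1 := by
    rw [show (1:ℝ) = Real.sqrt 1 by simp]
    exact Real.sqrt_lt_sqrt (by norm_num) (by norm_num)
  have E5 : ∀ᶠ d:ℕ in atTop, 1/2 ≤ t2f d := ht2to.eventually_const_le hhalf
  have E6 : ∀ᶠ d:ℕ in atTop, t2f d < 1 := ht2to.eventually_lt_const hlt1
  have E7 : ∀ᶠ d:ℕ in atTop, 16/27 * (2:ℝ)^(-η) ≤ 8/9 * (1 - (t2f d)^2) := by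
    have hQlim : Tendsto (fun d:ℕ => 8/9 * (1 - (t2f d)^2)) atTop (nhds (16/27)) := by
      have h1 : Tendsto (fun d:ℕ => (t2f d)^2) atTop (nhds ((Real.sqrt (1/3))^2)) :=
        ht2to.pow 2
      rw [Real.sq_sqrt (by norm_num : (0:ℝ) ≤ 1/3)] at h1
      have h2 := (tendsto_const_nhds (x := (1:ℝ)) (f := atTop (α := ℕ))).sub h1
      have h3 := (tendsto_const_nhds (x := (8/9:ℝ)) (f := atTop (α := ℕ))).mul h2
      convert h3 using 2
      norm_num
    have h2η : (2:ℝ)^(-η) < 1 :=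
      Real.rpow_lt_one_of_one_lt_of_neg one_lt_two (neg_lt_zero.2 hη)
    refine hQlim.eventually_const_le ?_
    nlinarith
  have E8 : ∀ᶠ d:ℕ in atTop, 4 ≤ (2:ℝ)^((1/4 * Real.logb 2 (27/16) + η) * (d:ℝ)) := by
    have hcη : 0 < 1/4 * Real.logb 2 (27/16) + η :=
      add_pos_of_nonneg_of_pos
        (mul_nonneg (by norm_num) (Real.logb_nonneg one_lt_two (by norm_num))) hη
    have htend : Tendsto (fun d:ℕ => (1/4 * Real.logb 2 (27/16) + η) * (d:ℝ)) atTop atTop :=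
      Tendsto.const_mul_atTop hcη tendsto_natCast_atTop_atTop
    refine (htend.eventually_ge_atTop 2).mono fun d h => ?_
    calc (4:ℝ) = (2:ℝ)^((2:ℕ):ℝ) := by rw [Real.rpow_natCast]; norm_num
      _ ≤ _ := by
          apply (Real.rpow_le_rpow_left_iff one_lt_two).2
          push_cast
          exact h
  have E9 : ∀ᶠ d:ℕ in atTop, 6144 * (d:ℝ)^2 ≤ (2:ℝ)^(3/2 * η * (d:ℝ)) := by
    have hb : (0:ℝ) < 3/2 * η * Real.log 2 := by
      have := Real.log_pos one_lt_two; positivity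
    have h := (isLittleO_pow_exp_pos_mul_atTop 2 hb).def
      (show (0:ℝ) < 1/6144 by norm_num)
    have hreal : ∀ᶠ x:ℝ in atTop, 6144 * x^2 ≤ (2:ℝ)^(3/2 * η * x) := by
      filter_upwards [h, eventually_ge_atTop (0:ℝ)] with x hx hx0
      have h2 : |x^2| ≤ 1/6144 * |Real.exp (3/2 * η * Real.log 2 * x)| := by
        simpa [Real.norm_eq_abs] using hx
      rw [abs_of_nonneg (sq_nonneg x), abs_of_nonneg (Real.exp_nonneg _)] at h2
      rw [Real.rpow_def_of_pos two_pos]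
      calc 6144 * x^2 ≤ Real.exp (3/2 * η * Real.log 2 * x) := by linarith
        _ = Real.exp (Real.log 2 * (3/2 * η * x)) := by ring_nf
    exact tendsto_natCast_atTop_atTop.eventually hreal
  filter_upwards [E1, E2, E3, E4, E5, E6, E7, E8, E9] with d h1 h2 h3 h4 h5 h6 h7 h8 h9
  exact ⟨h1, h2, h3, h4, h5, h6, h7, h8, h9⟩

/-- `σ` is the uniform (normalized rotation-invariant) probability measure on the unit sphere
`S^{d−1} ⊆ ℝ^d`, viewed as a measure on `ℝ^d` concentrated on the sphere. -/
def IsUniformSphereMeasure (d : ℕ) (σ : Measure (EuclideanSpace ℝ (Fin d))) : Prop :=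
  IsProbabilityMeasure σ ∧ σ (Metric.sphere (0 : EuclideanSpace ℝ (Fin d)) 1) = 1 ∧
    ∀ O : EuclideanSpace ℝ (Fin d) ≃ₗᵢ[ℝ] EuclideanSpace ℝ (Fin d), Measure.map (⇑O) σ = σ

/-- With `ε_d = 1/log₂²(d)` and `c′_d = ε_d + √(1/3 + ε_d/2)`, for every `η > 0` there is
`D` such that for all `d ≥ D` and all `m ≥ 2^{((1/4)·log₂(27/16) + η)·d}`, the expected
number of ordered solution triples `(i,j,k)` (with `x_i ≠ x_j`, `|⟨x_i,x_j⟩ − 1/3| ≤ ε_d`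
and `|⟨(x_i−x_j)/‖x_i−x_j‖, x_k⟩ − c′_d| ≤ ε_d`) among `m` i.i.d. uniform samples from
`S^{d−1}` is at least `m`. -/
theorem expected_triples_ge_list_size (η : ℝ) (hη : 0 < η) :
    ∃ D : ℕ, ∀ d : ℕ, D ≤ d → ∀ m : ℕ,
      (2 : ℝ) ^ ((1 / 4 * Real.logb 2 (27 / 16) + η) * d) ≤ (m : ℝ) →
      ∀ (σ : Measure (EuclideanSpace ℝ (Fin d))), IsUniformSphereMeasure d σ →
      ∀ (Ω : Type) (_ : MeasurableSpace Ω) (μ : Measure Ω), IsProbabilityMeasure μ →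
      ∀ (x : Fin m → Ω → EuclideanSpace ℝ (Fin d)),
        (∀ i, Measurable (x i)) →
        (∀ i, Measure.map (x i) μ = σ) →
        iIndepFun x μ →
        (m : ℝ) ≤ ∫ ω, ((Finset.univ.filter (fun t : Fin m × Fin m × Fin m =>
            t.1 ≠ t.2.1 ∧ t.1 ≠ t.2.2 ∧ t.2.1 ≠ t.2.2 ∧
            x t.1 ω ≠ x t.2.1 ω ∧
            |⟪x t.1 ω, x t.2.1 ω⟫ - 1 / 3| ≤ ((Real.logb 2 d) ^ 2)⁻¹ ∧
            |⟪‖x t.1 ω - x t.2.1 ω‖⁻¹ • (x t.1 ω - x t.2.1 ω), x t.2.2 ω⟫ -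
                (((Real.logb 2 d) ^ 2)⁻¹ +
                  Real.sqrt (1 / 3 + ((Real.logb 2 d) ^ 2)⁻¹ / 2))| ≤
              ((Real.logb 2 d) ^ 2)⁻¹)).card : ℝ) ∂μ := by
  obtain ⟨D₀, hD₀⟩ := Filter.eventually_atTop.1 (eventually_good η hη)
  refine ⟨max D₀ 2, ?_⟩
  intro d hDd m hm σ hσ Ω mΩ μ hμ x hxm hxd hindep
  obtain ⟨hprob, hsph, hinv⟩ := hσ
  haveI : IsProbabilityMeasure μ := hμ
  obtain ⟨hd2, hε0, hε12, hLg2, ht2a, ht2b, hQ, hM4, hbig⟩ :=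
    hD₀ d (le_trans (le_max_left _ _) hDd)
  have hd2' : 2 ≤ d := hd2
  obtain ⟨n, rfl⟩ : ∃ n, d = n + 1 := ⟨d - 1, by omega⟩
  have hn : 0 < n := by omega
  have hnR1 : (1:ℝ) ≤ (n:ℝ) := by exact_mod_cast hn
  -- abbreviations
  set ε : ℝ := ((Real.logb 2 ((n+1 : ℕ):ℝ))^2)⁻¹ with hεdef
  set c' : ℝ := ε + Real.sqrt (1/3 + ε/2) with hc'def
  have hee : epsf (n+1) = ε := rfl
  have hte : t2f (n+1) = c' := rfl
  rw [hee] at hε0 hε12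
  rw [hte] at ht2a ht2b hQ
  push_cast at hm hM4 hbig hLg2
  -- derived numeric facts
  have hLgpos : 0 < (Real.logb 2 ((n:ℝ)+1))^2 := by
    have := hε0
    rw [hεdef] at this
    push_cast at this
    exact inv_pos.1 this
  have hε8 : 8/((n:ℝ)+1) ≤ ε := by
    have h := inv_anti₀ hLgpos hLg2
    rw [hεdef]
    push_cast
    calc 8/((n:ℝ)+1) = (((n:ℝ)+1)/8)⁻¹ := by rw [inv_div]
      _ ≤ _ := h
  have hεd : 1/((n:ℝ)+1) ≤ ε := le_trans (by gcongr <;> norm_num) hε8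
  have hRn : 1 ≤ ε/2 * n := by
    have h1 : 8/((n:ℝ)+1)/2 * n ≤ ε/2 * n := by gcongr
    refine le_trans ?_ h1
    rw [div_div, show ((n:ℝ)+1)*2 = 2*((n:ℝ)+1) by ring, ← div_div,
      div_mul_eq_mul_div, le_div_iff₀ (by positivity)]
    linarith
  have hε0' : 0 < ε := hε0
  have hε23 : ε < 2/3 := by linarith
  have hc'pos : 0 < c' := lt_of_lt_of_le one_half_pos ht2a
  have hc'lt1 : c' < 1 := ht2b
  -- measures
  set G := tripleSet (n+1) ε c' with hGdef
  have hGm : MeasurableSet G := tripleSet_measurable ε c'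
  set e1 : 𝔼 (n+1) := EuclideanSpace.single (0 : Fin (n+1)) (1:ℝ) with he1def
  set s1 := σ {z | ⟪e1, z⟫ ∈ Set.Icc (1/3 - ε) (1/3 + ε)} with hs1def
  set s2 := σ {z | ⟪e1, z⟫ ∈ Set.Icc (c' - ε) (c' + ε)} with hs2def
  set p := ((σ.prod σ).prod σ) G with hpdef
  have hp : p = s1 * s2 := triple_prob n σ hprob hsph hinv hε0' hε23
  -- slab lower bounds
  set L1 : ℝ := 1/3 * (ε/2) * (Real.sqrt (1 - (1/3:ℝ)^2) ^ n * (1 - (1-ε/2)^n)) / 2 with hL1def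
  set L2 : ℝ := c' * (ε/2) * (Real.sqrt (1 - c'^2) ^ n * (1 - (1-ε/2)^n)) / 2 with hL2def
  have hIcc1 : Set.Icc ((1:ℝ)/3 - 2*(ε/2)) (1/3 + 2*(ε/2)) = Set.Icc (1/3 - ε) (1/3 + ε) := by
    rw [show (1:ℝ)/3 - 2*(ε/2) = 1/3 - ε by ring, show (1:ℝ)/3 + 2*(ε/2) = 1/3 + ε by ring]
  have hIcc2 : Set.Icc (c' - 2*(ε/2)) (c' + 2*(ε/2)) = Set.Icc (c' - ε) (c' + ε) := by
    rw [show c' - 2*(ε/2) = c' - ε by ring, show c' + 2*(ε/2) = c' + ε by ring]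
  have hs1low : ENNReal.ofReal L1 ≤ s1 := by
    have h := slab_lower n hn σ hprob hsph hinv (norm_e1 (n+1) (Nat.succ_pos n))
      (show (0:ℝ) < 1/3 by norm_num) (show (1:ℝ)/3 < 1 by norm_num)
      (show 0 < ε/2 by linarith) (show ε/2 ≤ 1/2 by linarith)
    rw [hIcc1] at h
    exact h
  have hs2low : ENNReal.ofReal L2 ≤ s2 := by
    have h := slab_lower n hn σ hprob hsph hinv (norm_e1 (n+1) (Nat.succ_pos n))
      hc'pos hc'lt1 (show 0 < ε/2 by linarith) (show ε/2 ≤ 1/2 by linarith)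
    rw [hIcc2] at h
    exact h
  have hRnn : 0 ≤ 1 - (1-ε/2)^n := by
    have h1 : (1-ε/2)^n ≤ 1 := pow_le_one₀ (by linarith) (by linarith)
    linarith
  have hL1nn : 0 ≤ L1 := by
    rw [hL1def]
    apply div_nonneg _ (by norm_num)
    exact mul_nonneg (mul_nonneg (by norm_num) (by linarith))
      (mul_nonneg (pow_nonneg (Real.sqrt_nonneg _) n) hRnn)
  have hL2nn : 0 ≤ L2 := by
    rw [hL2def]
    apply div_nonneg _ (by norm_num)
    exact mul_nonneg (mul_nonneg (by linarith) (by linarith))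
      (mul_nonneg (pow_nonneg (Real.sqrt_nonneg _) n) hRnn)
  have hs1r : L1 ≤ s1.toReal := by
    have h := ENNReal.toReal_mono (measure_ne_top σ _) hs1low
    rwa [ENNReal.toReal_ofReal hL1nn] at h
  have hs2r : L2 ≤ s2.toReal := by
    have h := ENNReal.toReal_mono (measure_ne_top σ _) hs2low
    rwa [ENNReal.toReal_ofReal hL2nn] at h
  have hPle : L1 * L2 ≤ p.toReal := by
    rw [hp, ENNReal.toReal_mul]
    exact mul_le_mul hs1r hs2r hL2nn ENNReal.toReal_nonneg
  -- key numeric bound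
  have hkey : 16 ≤ (L1 * L2) *
      ((2:ℝ)^((1/4 * Real.logb 2 (27/16) + η) * ((n:ℝ)+1)))^2 :=
    key16 η hη n ε c' hε0' hε12 hεd ht2a ht2b hQ hRn hbig
  have hm_part := m_part ((2:ℝ)^((1/4 * Real.logb 2 (27/16) + η) * ((n:ℝ)+1)))
    (L1 * L2) hM4 (mul_nonneg hL1nn hL2nn) hkey m hm
  -- events
  set F : (Fin m × Fin m × Fin m) → Ω → ((𝔼 (n+1)) × (𝔼 (n+1))) × (𝔼 (n+1)) :=
    fun t ω => ((x t.1 ω, x t.2.1 ω), x t.2.2 ω) with hFdef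
  have hFm : ∀ t, Measurable (F t) :=
    fun t => ((hxm _).prodMk (hxm _)).prodMk (hxm _)
  set B : (Fin m × Fin m × Fin m) → Set Ω := fun t =>
    {ω | t.1 ≠ t.2.1 ∧ t.1 ≠ t.2.2 ∧ t.2.1 ≠ t.2.2 ∧
        x t.1 ω ≠ x t.2.1 ω ∧
        |⟪x t.1 ω, x t.2.1 ω⟫ - 1/3| ≤ ε ∧
        |⟪‖x t.1 ω - x t.2.1 ω‖⁻¹ • (x t.1 ω - x t.2.1 ω), x t.2.2 ω⟫ - c'| ≤ ε} with hBdef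
  have hBt : ∀ t : Fin m × Fin m × Fin m,
      (t.1 ≠ t.2.1 ∧ t.1 ≠ t.2.2 ∧ t.2.1 ≠ t.2.2) → B t = F t ⁻¹' G := by
    intro t ht
    ext ω
    simp only [hBdef, Set.mem_setOf_eq, Set.mem_preimage, hGdef, tripleSet, uvec, hFdef]
    constructor
    · rintro ⟨-, -, -, h4, h5, h6⟩; exact ⟨h4, h5, h6⟩
    · rintro ⟨h4, h5, h6⟩; exact ⟨ht.1, ht.2.1, ht.2.2, h4, h5, h6⟩
  have hBe : ∀ t : Fin m × Fin m × Fin m,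
      ¬(t.1 ≠ t.2.1 ∧ t.1 ≠ t.2.2 ∧ t.2.1 ≠ t.2.2) → B t = ∅ := by
    intro t ht
    refine Set.eq_empty_iff_forall_notMem.2 fun ω hω => ht ⟨hω.1, hω.2.1, hω.2.2.1⟩
  have hBm : ∀ t, MeasurableSet (B t) := by
    intro t
    by_cases h : t.1 ≠ t.2.1 ∧ t.1 ≠ t.2.2 ∧ t.2.1 ≠ t.2.2
    · rw [hBt t h]; exact (hFm t) hGm
    · rw [hBe t h]; exact MeasurableSet.empty
  set filterD := Finset.univ.filter (fun t : Fin m × Fin m × Fin m =>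
    t.1 ≠ t.2.1 ∧ t.1 ≠ t.2.2 ∧ t.2.1 ≠ t.2.2) with hfilterD
  have hterm : ∀ t ∈ filterD, (μ (B t)).toReal = p.toReal := by
    intro t ht
    rw [hfilterD, Finset.mem_filter] at ht
    obtain ⟨-, h1, h2, h3⟩ := ht
    rw [hBt t ⟨h1, h2, h3⟩, ← Measure.map_apply (hFm t) hGm,
      joint_law μ σ x hxm hxd hindep t.1 t.2.1 t.2.2 h1 h2 h3]
  have hsumD : ∑ t ∈ filterD, (μ (B t)).toReal
      = ((m * ((m-1) * (m-2)) : ℕ) : ℝ) * p.toReal := by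
    rw [Finset.sum_congr rfl hterm, Finset.sum_const, hfilterD, card_distinct m,
      nsmul_eq_mul]
  have key : ∀ f : Ω → ℝ,
      (∀ ω, f ω = ∑ t : Fin m × Fin m × Fin m, (B t).indicator (fun _ => (1:ℝ)) ω) →
      (m:ℝ) ≤ ∫ ω, f ω ∂μ := by
    intro f hf
    have hIeq : ∫ ω, f ω ∂μ = ∑ t : Fin m × Fin m × Fin m, (μ (B t)).toReal := by
      rw [show f = fun ω => ∑ t : Fin m × Fin m × Fin m,
          (B t).indicator (fun _ => (1:ℝ)) ω from funext hf,
        integral_finset_sum _ (fun t _ => (integrable_const (1:ℝ)).indicator (hBm t))]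
      refine Finset.sum_congr rfl fun t _ => ?_
      rw [integral_indicator_const (1:ℝ) (hBm t)]
      simp
      rfl
    rw [hIeq]
    calc (m:ℝ) ≤ ((m * ((m-1) * (m-2)) : ℕ) : ℝ) * (L1 * L2) := hm_part
      _ ≤ ((m * ((m-1) * (m-2)) : ℕ) : ℝ) * p.toReal :=
          mul_le_mul_of_nonneg_left hPle (Nat.cast_nonneg _)
      _ = ∑ t ∈ filterD, (μ (B t)).toReal := hsumD.symm
      _ ≤ ∑ t : Fin m × Fin m × Fin m, (μ (B t)).toReal :=
          Finset.sum_le_sum_of_subset_of_nonneg (Finset.filter_subset _ _)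
            (fun t _ _ => ENNReal.toReal_nonneg)
  refine key _ fun ω => ?_
  rw [Finset.card_filter]
  push_cast
  refine Finset.sum_congr rfl fun t _ => ?_
  simp only [Set.indicator_apply, hBdef, Set.mem_setOf_eq]
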